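/- Let T be an isometry of a nondegenerate space (V,B) over a field F of characteristic different from 2, with V ≠ 0, let m ∈ F[X] be the minimal polynomial of T over F, and let A = F[X]/(m). Then the image t of X in A is a unit of A, and there exists a unique F-algebra automorphism σ of A with σ(t) = t⁻¹. -/

import Mathlib

/-- The group of isometries of a bilinear space `(V, B)`, as a subgroup of the
group of linear automorphisms of `V`. -/
def isometryGroup (F : Type*) [Field F] {V : Type*} [AddCommGroup V] [Module F V]
    (B : LinearMap.BilinForm F V) : Subgroup (V ≃ₗ[F] V) where
  carrier := {T | ∀ u v : V, B (T u) (T v) = B u v}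
  one_mem' := by intro u v; rfl
  mul_mem' := by
    intro a b ha hb u v
    have h1 : (a * b) u = a (b u) := rfl
    have h2 : (a * b) v = a (b v) := rfl
    rw [h1, h2, ha, hb]
  inv_mem' := by
    intro a ha u v
    have h := ha (a⁻¹ u) (a⁻¹ v)
    have h1 : a (a⁻¹ u) = u := a.apply_symm_apply u
    have h2 : a (a⁻¹ v) = v := a.apply_symm_apply v
    rw [h1, h2] at h
    exact h.symm


open Polynomial

set_option maxHeartbeats 1000000 in
/-- Let `m` be the minimal polynomial of an isometry `T` of a nonzero
nondegenerate space and let `A = F[X]/(m)`.  Then the image `t` of `X` in `A`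
is a unit, and there is a unique `F`-algebra automorphism `σ` of `A` with
`σ(t) = t⁻¹` (expressed as `σ t * t = 1`). -/
theorem adjoinRoot_minpoly_automorphism
    (F : Type*) [Field F] (hchar : ringChar F ≠ 2)
    (V : Type*) [AddCommGroup V] [Module F V] [FiniteDimensional F V] [Nontrivial V]
    (B : LinearMap.BilinForm F V) (hB : B.IsSymm ∨ B.IsAlt) (hnd : B.Nondegenerate)
    (T : V ≃ₗ[F] V) (hT : T ∈ isometryGroup F B)
    (m : Polynomial F) (hm : m = minpoly F ((T : V →ₗ[F] V) : Module.End F V)) :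
    IsUnit (AdjoinRoot.root m) ∧
    ∃! σ : AdjoinRoot m ≃ₐ[F] AdjoinRoot m,
      σ (AdjoinRoot.root m) * AdjoinRoot.root m = 1 := by
  classical
  set E : Module.End F V := ((T : V →ₗ[F] V) : Module.End F V) with hE
  set Einv : Module.End F V := ((T.symm : V →ₗ[F] V) : Module.End F V) with hEinv
  have hEmul : E * Einv = 1 := by
    ext v; simp [hE, hEinv, Module.End.mul_apply]
  have hEmul' : Einv * E = 1 := by
    ext v; simp [hE, hEinv, Module.End.mul_apply]
  have hint : IsIntegral F E := Algebra.IsIntegral.isIntegral E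
  have hmne : m ≠ 0 := hm ▸ minpoly.ne_zero hint
  have haevalE : aeval E m = 0 := by rw [hm]; exact minpoly.aeval F E
  -- constant coefficient is nonzero
  have hc0 : m.coeff 0 ≠ 0 := by
    intro h0
    obtain ⟨q, hq⟩ := X_dvd_iff.mpr h0
    have h1 : E * aeval E q = 0 := by
      have h1' := haevalE
      rw [hq, map_mul, aeval_X] at h1'
      exact h1'
    have hq0 : aeval E q = 0 := by
      calc aeval E q = (Einv * E) * aeval E q := by rw [hEmul', one_mul]
        _ = Einv * (E * aeval E q) := by rw [mul_assoc]
        _ = 0 := by rw [h1, mul_zero]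
    have hqne : q ≠ 0 := fun h => hmne (by simp [hq, h])
    have hdvd : m ∣ q := by rw [hm]; exact minpoly.dvd F E hq0
    have hdeg := Polynomial.natDegree_le_of_dvd hdvd hqne
    have hdeg2 : m.natDegree = 1 + q.natDegree := by
      rw [hq, natDegree_mul X_ne_zero hqne, natDegree_X]
    omega
  -- the root is a unit
  obtain ⟨q, hq⟩ : X ∣ (m - C (m.coeff 0)) := X_dvd_iff.mpr (by simp)
  have hrq : AdjoinRoot.root m * AdjoinRoot.mk m q = AdjoinRoot.mk m (C (-(m.coeff 0))) := by
    rw [← AdjoinRoot.mk_X, ← map_mul, ← hq]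
    rw [map_sub, AdjoinRoot.mk_self, zero_sub, C_neg, map_neg]
  have hcne : (-(m.coeff 0)) ≠ 0 := neg_ne_zero.mpr hc0
  set uinv : AdjoinRoot m := AdjoinRoot.mk m (C (-(m.coeff 0))⁻¹) * AdjoinRoot.mk m q with huinv
  have hval_inv : AdjoinRoot.root m * uinv = 1 := by
    rw [huinv, ← mul_assoc, mul_comm (AdjoinRoot.root m), mul_assoc, hrq, ← map_mul, ← C_mul,
      inv_mul_cancel₀ hcne, map_one, map_one]
  set u : (AdjoinRoot m)ˣ :=
    ⟨AdjoinRoot.root m, uinv, hval_inv, by rw [mul_comm]; exact hval_inv⟩ with hu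
  have hu_isUnit : IsUnit (AdjoinRoot.root m) := ⟨u, rfl⟩
  have huu : (↑u⁻¹ : AdjoinRoot m) * AdjoinRoot.root m = 1 := u.inv_mul
  have huu' : AdjoinRoot.root m * (↑u⁻¹ : AdjoinRoot m) = 1 := u.mul_inv
  refine ⟨hu_isUnit, ?_⟩
  set r : Polynomial F := C (-(m.coeff 0))⁻¹ * q with hr
  have huinv2 : uinv = AdjoinRoot.mk m r := by rw [huinv, ← map_mul]
  have hdvdXr : m ∣ X * r - 1 := by
    rw [← AdjoinRoot.mk_eq_zero, map_sub, map_one, map_mul, AdjoinRoot.mk_X, ← huinv2,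
      hval_inv, sub_self]
  have haevalEr : E * aeval E r = 1 := by
    obtain ⟨s, hsX⟩ := hdvdXr
    have h := congrArg (aeval E) hsX
    simp only [map_sub, map_mul, map_one, aeval_X, haevalE, zero_mul, sub_eq_zero] at h
    exact h
  have hErEinv : aeval E r = Einv := by
    calc aeval E r = (Einv * E) * aeval E r := by rw [hEmul', one_mul]
      _ = Einv * (E * aeval E r) := mul_assoc _ _ _
      _ = Einv := by rw [haevalEr, mul_one]
  -- key bilinear identity
  have hstep : ∀ x v : V, B (E x) v = B x (Einv v) := by
    intro x v
    have h := hT x (T.symm v)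
    rw [LinearEquiv.apply_symm_apply] at h
    exact h
  have hkey : ∀ p : Polynomial F, ∀ x v : V, B (aeval E p x) v = B x (aeval Einv p v) := by
    intro p
    induction p using Polynomial.induction_on' with
    | add p q hp hq =>
      intro x v
      simp only [map_add, LinearMap.add_apply]
      rw [hp, hq]
    | monomial n a =>
      have hpow : ∀ k : ℕ, ∀ x v : V, B ((E ^ k) x) v = B x ((Einv ^ k) v) := by
        intro k
        induction k with
        | zero => intro x v; simp
        | succ k ih =>
          intro x v
          rw [pow_succ', pow_succ]
          have h1 : (E * E ^ k) x = E ((E ^ k) x) := rfl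
          have h2 : (Einv ^ k * Einv) v = (Einv ^ k) (Einv v) := rfl
          rw [h1, h2]
          exact (hstep _ _).trans (ih _ _)
      intro x v
      simp only [aeval_monomial]
      have h1 : (algebraMap F (Module.End F V) a * E ^ n) x = a • ((E ^ n) x) := by
        rw [Module.End.mul_apply, Module.algebraMap_end_apply]
      have h2 : (algebraMap F (Module.End F V) a * Einv ^ n) v = a • ((Einv ^ n) v) := by
        rw [Module.End.mul_apply, Module.algebraMap_end_apply]
      rw [h1, h2, LinearMap.map_smul, LinearMap.map_smul, LinearMap.smul_apply, hpow n]
  have hflip : ∀ w : V, (∀ x : V, B x w = 0) → w = 0 := by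
    intro w hw
    refine hnd.1 w (fun n => ?_)
    rcases hB with hsym | halt
    · have h := LinearMap.isSymm_def.mp (LinearMap.BilinForm.isSymm_iff.mp hsym) w n
      rw [RingHom.id_apply] at h
      rw [h, hw n]
    · have h := LinearMap.IsAlt.neg halt n w
      rw [← h, hw n, neg_zero]
  -- m (T⁻¹) = 0
  have hminv : aeval Einv m = 0 := by
    ext v
    rw [LinearMap.zero_apply]
    refine hflip _ (fun x => ?_)
    rw [← hkey m x v, haevalE, LinearMap.zero_apply, LinearMap.map_zero₂]
  -- aeval of m at the inverse of the root is zero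
  have hcompdvd : m ∣ m.comp r := by
    rw [hm]
    apply minpoly.dvd F E
    rw [← hm, aeval_comp, hErEinv, hminv]
  have hs : aeval (↑u⁻¹ : AdjoinRoot m) m = 0 := by
    have hcoe : (↑u⁻¹ : AdjoinRoot m) = AdjoinRoot.mk m r := huinv2
    rw [hcoe]
    have h := Polynomial.aeval_algHom_apply
      (Ideal.Quotient.mkₐ F (Ideal.span {m} : Ideal (Polynomial F))) r m
    have h2 : aeval (AdjoinRoot.mk m r) m = AdjoinRoot.mk m (aeval r m) := h
    rw [h2, ← comp_eq_aeval, AdjoinRoot.mk_eq_zero.mpr hcompdvd]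
  -- the automorphism
  set ψ : AdjoinRoot m →ₐ[F] AdjoinRoot m := AdjoinRoot.liftAlgHom m (Algebra.ofId F _) (↑u⁻¹) hs with hψ
  have hψroot : ψ (AdjoinRoot.root m) = ↑u⁻¹ := by
    rw [hψ]; exact AdjoinRoot.liftAlgHom_root m _ _ hs
  have hψinv : ψ (↑u⁻¹) = AdjoinRoot.root m := by
    have h1 : ψ ((↑u⁻¹ : AdjoinRoot m) * AdjoinRoot.root m) = 1 := by
      rw [huu, map_one]
    rw [map_mul, hψroot] at h1
    calc ψ (↑u⁻¹) = ψ (↑u⁻¹) * ((↑u⁻¹ : AdjoinRoot m) * AdjoinRoot.root m) := by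
          rw [huu, mul_one]
      _ = (ψ (↑u⁻¹) * ↑u⁻¹) * AdjoinRoot.root m := (mul_assoc _ _ _).symm
      _ = AdjoinRoot.root m := by rw [h1, one_mul]
  have hcomp : ψ.comp ψ = AlgHom.id F (AdjoinRoot m) := by
    apply AdjoinRoot.algHom_ext
    rw [AlgHom.coe_comp, Function.comp_apply, hψroot, hψinv, AlgHom.coe_id, id_eq]
  set σ : AdjoinRoot m ≃ₐ[F] AdjoinRoot m := AlgEquiv.ofAlgHom ψ ψ hcomp hcomp with hσ
  have hσroot : σ (AdjoinRoot.root m) = ↑u⁻¹ := hψroot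
  refine ⟨σ, ?_, ?_⟩
  · show σ (AdjoinRoot.root m) * AdjoinRoot.root m = 1
    rw [hσroot]; exact huu
  · intro σ' hσ'
    have hroot' : σ' (AdjoinRoot.root m) = ↑u⁻¹ := by
      calc σ' (AdjoinRoot.root m)
          = σ' (AdjoinRoot.root m) * (AdjoinRoot.root m * ↑u⁻¹) := by
            rw [huu', mul_one]
        _ = (σ' (AdjoinRoot.root m) * AdjoinRoot.root m) * ↑u⁻¹ := (mul_assoc _ _ _).symm
        _ = ↑u⁻¹ := by rw [hσ', one_mul]
    have : (σ' : AdjoinRoot m →ₐ[F] AdjoinRoot m) = (σ : AdjoinRoot m →ₐ[F] AdjoinRoot m) := by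
      apply AdjoinRoot.algHom_ext
      show σ' (AdjoinRoot.root m) = σ (AdjoinRoot.root m)
      rw [hroot', hσroot]
    exact AlgEquiv.coe_algHom_injective this
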